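/- Let q be a power of a prime, let F be the finite field with q² elements, and let 2 ≤ d ≤ q. If z is a codeword of weight exactly d of the corner code H^0_d, then the d points of the support of z are collinear, i.e. there is an affine line L in F×F (either a vertical line x = t or a line y = a·x + b) containing every point (x,y) with z(x,y) ≠ 0. -/

import Mathlib

/-- `z : F × F → F` is a codeword of the Hermitian code `H^j_d`: it vanishes outside the
Hermitian curve `x^(q+1) = y^q + y` and is orthogonal to the evaluations of the monomials
`x^r y^s` with `r + s ≤ d - 2` or `(r, s) = (d - 1 - i, i)` for some `0 ≤ i < j`. -/
def hermitianCodeword (q d j : ℕ) {F : Type*} [Field F] [Fintype F] [DecidableEq F]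
    (z : F × F → F) : Prop :=
  (∀ p : F × F, p.1 ^ (q + 1) ≠ p.2 ^ q + p.2 → z p = 0) ∧
  ∀ r s : ℕ, (r + s ≤ d - 2 ∨ ∃ i < j, r = d - 1 - i ∧ s = i) →
    ∑ p ∈ Finset.univ.filter (fun p : F × F => p.1 ^ (q + 1) = p.2 ^ q + p.2),
      z p * p.1 ^ r * p.2 ^ s = 0

/-- The weight of a codeword: the number of points where it does not vanish. -/
def hermitianWeight {F : Type*} [Field F] [Fintype F] [DecidableEq F]
    (z : F × F → F) : ℕ :=
  (Finset.univ.filter (fun p : F × F => z p ≠ 0)).card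

/-- A codeword of `H^0_d` is orthogonal to `x^r y^s` times any product of at most
`d - 2 - r - s` affine-linear forms. -/
theorem hermitian_orth_prod {F : Type*} [Field F] [Fintype F] [DecidableEq F]
    (q d : ℕ) (z : F × F → F) (hz : hermitianCodeword q d 0 z)
    (t : Finset (F × F)) (cs : F × F → F × F × F) :
    ∀ r s : ℕ, r + s + t.card ≤ d - 2 →
      ∑ p ∈ Finset.univ.filter (fun p : F × F => p.1 ^ (q + 1) = p.2 ^ q + p.2),
        z p * p.1 ^ r * p.2 ^ s *
          ∏ i ∈ t, ((cs i).1 * p.1 + (cs i).2.1 * p.2 + (cs i).2.2) = 0 := by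
  classical
  induction t using Finset.induction_on with
  | empty =>
    intro r s h
    simp only [Finset.prod_empty, mul_one, Finset.card_empty, add_zero] at *
    exact hz.2 r s (Or.inl h)
  | insert _ _ hi ih =>
    rename_i a t'
    intro r s h
    rw [Finset.card_insert_of_notMem hi] at h
    have e : ∀ p : F × F,
        z p * p.1 ^ r * p.2 ^ s *
          ∏ i ∈ insert a t', ((cs i).1 * p.1 + (cs i).2.1 * p.2 + (cs i).2.2) =
        (cs a).1 * (z p * p.1 ^ (r + 1) * p.2 ^ s *
          ∏ i ∈ t', ((cs i).1 * p.1 + (cs i).2.1 * p.2 + (cs i).2.2)) +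
        ((cs a).2.1 * (z p * p.1 ^ r * p.2 ^ (s + 1) *
          ∏ i ∈ t', ((cs i).1 * p.1 + (cs i).2.1 * p.2 + (cs i).2.2)) +
        (cs a).2.2 * (z p * p.1 ^ r * p.2 ^ s *
          ∏ i ∈ t', ((cs i).1 * p.1 + (cs i).2.1 * p.2 + (cs i).2.2))) := by
      intro p
      rw [Finset.prod_insert hi]
      ring
    rw [Finset.sum_congr rfl fun p _ => e p, Finset.sum_add_distrib,
      Finset.sum_add_distrib, ← Finset.mul_sum, ← Finset.mul_sum, ← Finset.mul_sum,
      ih (r + 1) s (by omega), ih r (s + 1) (by omega), ih r s (by omega)]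
    ring

theorem stmt_16 (q d : ℕ) (hq : IsPrimePow q) (hd : 2 ≤ d) (hdq : d ≤ q)
    (F : Type*) [Field F] [Fintype F] [DecidableEq F] (hF : Fintype.card F = q ^ 2)
    (z : F × F → F) (hz : hermitianCodeword q d 0 z) (hw : hermitianWeight z = d) :
    (∃ t : F, ∀ p : F × F, z p ≠ 0 → p.1 = t) ∨
    (∃ a b : F, ∀ p : F × F, z p ≠ 0 → p.2 = a * p.1 + b) := by
  classical
  set S : Finset (F × F) := Finset.univ.filter (fun p : F × F => z p ≠ 0) with hSdef
  have hScard : S.card = d := hw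
  have memS : ∀ p : F × F, p ∈ S ↔ z p ≠ 0 := by
    intro p; simp [hSdef]
  obtain ⟨u, hu, v, hv, huv⟩ := Finset.one_lt_card.mp (by omega : 1 < S.card)
  -- the line through u and v has coefficients (A, B, C)
  set A : F := -(v.2 - u.2) with hA
  set B : F := v.1 - u.1 with hB
  set C : F := (v.2 - u.2) * u.1 - (v.1 - u.1) * u.2 with hC
  by_cases hcol : ∀ w ∈ S, A * w.1 + B * w.2 + C = 0
  · -- all support points lie on the line through u and v
    by_cases hx : u.1 = v.1
    · left
      refine ⟨u.1, fun p hp => ?_⟩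
      have hpS : p ∈ S := (memS p).mpr hp
      have h1 := hcol p hpS
      have hy : v.2 - u.2 ≠ 0 := by
        intro h
        exact huv (Prod.ext hx (sub_eq_zero.mp h).symm)
      have h2 : (v.2 - u.2) * (u.1 - p.1) = 0 := by
        rw [hA, hB, hC] at h1
        linear_combination h1 + (p.2 - u.2) * hx
      rcases mul_eq_zero.mp h2 with h | h
      · exact absurd h hy
      · exact (sub_eq_zero.mp h).symm
    · right
      have hBne : B ≠ 0 := sub_ne_zero.mpr (fun h => hx h.symm)
      refine ⟨(v.2 - u.2) / B, u.2 - (v.2 - u.2) / B * u.1, fun p hp => ?_⟩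
      have hpS : p ∈ S := (memS p).mpr hp
      have h1 := hcol p hpS
      rw [hA, hB, hC] at h1
      have h2 : (v.1 - u.1) * p.2 =
          (v.2 - u.2) * p.1 + ((v.1 - u.1) * u.2 - (v.2 - u.2) * u.1) := by
        linear_combination h1
      rw [hB] at hBne ⊢
      field_simp
      linear_combination h2
  · -- there is a support point w off the line: derive a contradiction
    exfalso
    push_neg at hcol
    obtain ⟨w, hwS, hwline⟩ := hcol
    have hwu : w ≠ u := by
      intro h; apply hwline; rw [h, hA, hB, hC]; ring
    have hwv : w ≠ v := by
      intro h; apply hwline; rw [h, hA, hB, hC]; ring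
    have hzw : z w ≠ 0 := (memS w).mp hwS
    -- the index set: all support points except w and u
    set t : Finset (F × F) := S \ {w, u} with ht
    have hvt : v ∈ t := by
      simp only [ht, Finset.mem_sdiff, Finset.mem_insert, Finset.mem_singleton]
      exact ⟨hv, by push_neg; exact ⟨fun h => hwv h.symm, fun h => huv h.symm⟩⟩
    have htcard : t.card = d - 2 := by
      rw [ht, Finset.card_sdiff_of_subset]
      · rw [hScard, Finset.card_insert_of_notMem (by simpa using hwu),
          Finset.card_singleton]
      · intro x hx
        simp only [Finset.mem_insert, Finset.mem_singleton] at hx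
        rcases hx with rfl | rfl
        · exact hwS
        · exact hu
    -- the linear forms: the line u-v for the index v, coordinate lines otherwise
    set cs : F × F → F × F × F := fun p =>
      if p = v then (A, B, C)
      else if p.1 ≠ w.1 then ((1 : F), (0 : F), -p.1) else ((0 : F), (1 : F), -p.2)
      with hcs
    have h0 := hermitian_orth_prod q d z hz t cs 0 0 (by omega)
    have hwcurve : w ∈ Finset.univ.filter
        (fun p : F × F => p.1 ^ (q + 1) = p.2 ^ q + p.2) := by
      simp only [Finset.mem_filter, Finset.mem_univ, true_and]
      by_contra h
      exact hzw (hz.1 w h)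
    rw [Finset.sum_eq_single_of_mem w hwcurve ?_] at h0
    · -- the term at w is nonzero
      apply absurd h0
      apply mul_ne_zero
      · apply mul_ne_zero
        · apply mul_ne_zero hzw
          simp
        · simp
      · rw [Finset.prod_ne_zero_iff]
        intro i hit
        have hit' := hit
        rw [ht, Finset.mem_sdiff, Finset.mem_insert, Finset.mem_singleton] at hit'
        obtain ⟨hiS, hi2⟩ := hit'
        push_neg at hi2
        by_cases hiv : i = v
        · rw [hcs]; simp only [hiv, if_pos rfl]
          exact hwline
        · rw [hcs]; simp only [if_neg hiv]
          by_cases hix : i.1 ≠ w.1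
          · rw [if_pos hix]
            intro h
            exact hix (by linear_combination -h)
          · rw [if_neg hix]
            push_neg at hix
            have h2 : i.2 ≠ w.2 := by
              intro h; exact hi2.1 (Prod.ext hix h)
            intro h
            exact h2 (by linear_combination -h)
    · -- all the other terms vanish
      intro b _ hbw
      by_cases hzb : z b = 0
      · simp [hzb]
      · have hbS : b ∈ S := (memS b).mpr hzb
        apply mul_eq_zero_of_right
        by_cases hbu : b = u
        · apply Finset.prod_eq_zero hvt
          have hcsv : cs v = (A, B, C) := by simp [hcs]
          rw [hcsv, hbu, hA, hB, hC]; ring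
        · have hbt : b ∈ t := by
            rw [ht, Finset.mem_sdiff, Finset.mem_insert, Finset.mem_singleton]
            exact ⟨hbS, by push_neg; exact ⟨hbw, hbu⟩⟩
          apply Finset.prod_eq_zero hbt
          by_cases hbv : b = v
          · have hcsv : cs b = (A, B, C) := by simp [hcs, hbv]
            rw [hcsv, hbv, hA, hB, hC]; ring
          · rw [hcs]; simp only [if_neg hbv]
            by_cases hbx : b.1 ≠ w.1
            · rw [if_pos hbx]; ring
            · rw [if_neg hbx]; ring
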